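/- arXiv:math/0001165 — 7 statements merged into one kernel-verified Lean document; each statement's English description precedes it below -/
import Mathlib

section
/- Let F be a directed forest on vertex set N and D ⊆ N such that no arc of F has its terminus in D. Then for any directed forest G on N, the D-exchange of F by G is a forest. -/
open Relation

/-- The arc relation of a functional digraph: `F i = some j` means there is an arc `i → j`. -/
def Arc {V : Type*} (F : V → Option V) (i j : V) : Prop := F i = some j

/-- A directed forest: a functional digraph (out-degree ≤ 1) without directed circuits. -/
def IsForest {V : Type*} (F : V → Option V) : Prop :=
  ∀ i, ¬ Relation.TransGen (Arc F) i i

/-- `j` is accessible from `i` by a directed walk. -/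
def Reaches {V : Type*} (F : V → Option V) (i j : V) : Prop :=
  Relation.ReflTransGen (Arc F) i j

open Classical in
/-- The `D`-exchange of `F` by `G`: replace the outgoing arcs (in `F`) of vertices of `D`
by their outgoing arcs in `G`. -/
noncomputable def exchange {V : Type*} (D : Set V) (F G : V → Option V) : V → Option V :=
  fun i => if i ∈ D then G i else F i

/-- The set of vertices of the tree of the forest `F` with root `r`. -/
def treeSet {V : Type*} (F : V → Option V) (r : V) : Set V := {i | Reaches F i r}

/-- If no arc of the forest `F` comes into `D`, then the `D`-exchange of `F` by any forest `G`
is a forest. -/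
theorem exchange_isForest_of_no_arc_into {V : Type*} (F G : V → Option V) (D : Set V)
    (hF : IsForest F) (hG : IsForest G)
    (hD : ∀ i j, Arc F i j → j ∉ D) :
    IsForest (exchange D F G) := by
  classical
  set H := exchange D F G with hH
  have harc : ∀ x y, Arc H x y → x ∈ D → Arc G x y := by
    intro x y h hx
    simpa [Arc, hH, exchange, hx] using h
  have harcF : ∀ x y, Arc H x y → x ∉ D → Arc F x y := by
    intro x y h hx
    simpa [Arc, hH, exchange, hx] using h
  have hback : ∀ x y, Arc H x y → y ∈ D → x ∈ D := by
    intro x y h hy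
    by_contra hx
    exact hD x y (harcF x y h hx) hy
  -- if target in D, whole path is G-path
  have lemC : ∀ x y, Relation.TransGen (Arc H) x y → y ∈ D →
      Relation.TransGen (Arc G) x y := by
    intro x y h
    induction h with
    | single h => intro hy; exact .single (harc _ _ h (hback _ _ h hy))
    | tail h1 h2 ih =>
      intro hy
      have hb := hback _ _ h2 hy
      exact (ih hb).tail (harc _ _ h2 hb)
  -- if source not in D, whole path is F-path and target not in D
  have lemD : ∀ x y, Relation.TransGen (Arc H) x y → x ∉ D →
      Relation.TransGen (Arc F) x y ∧ y ∉ D := by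
    intro x y h
    induction h with
    | single h =>
      intro hx
      have hf := harcF _ _ h hx
      exact ⟨.single hf, hD _ _ hf⟩
    | tail h1 h2 ih =>
      intro hx
      obtain ⟨hp, hb⟩ := ih hx
      have hf := harcF _ _ h2 hb
      exact ⟨hp.tail hf, hD _ _ hf⟩
  intro i h
  by_cases hi : i ∈ D
  · exact hG i (lemC i i h hi)
  · exact hF i (lemD i i h hi).1
end

section
/- Let F be a directed forest on vertex set N and D ⊆ N such that no arc of F has its origin in D. Then for any directed forest G on N, the D-exchange of G by F is a forest. -/
open Relation

/-- If no arc of the forest `F` comes out of `D`, then the `D`-exchange of any forest `G`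
by `F` is a forest. -/
theorem exchange_isForest_of_no_arc_out {V : Type*} (F G : V → Option V) (D : Set V)
    (hF : IsForest F) (hG : IsForest G)
    (hD : ∀ i ∈ D, ∀ j, ¬ Arc F i j) :
    IsForest (exchange D G F) := by
  intro i h
  refine hG i (TransGen.mono ?_ _ _ h)
  intro a b hab
  unfold Arc exchange at hab
  split at hab
  · exact absurd hab (hD a ‹_› b)
  · exact hab
end

section
/- Let F and G be directed forests on the same vertex set, let T^F be a (connected) tree component of F, and let D be the vertex set of T^F. Then both the D-exchange of F by G and the D-exchange of G by F are forests. -/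
open Relation

private lemma reach_closed {V : Type*} {H : V → Option V} {T : V → Prop}
    (hT : ∀ i, T i → ∀ j, Arc H i j → T j) {i j : V}
    (h : Relation.TransGen (Arc H) i j) (hi : T i) : T j := by
  induction h with
  | single h => exact hT _ hi _ h
  | tail _ h ih => exact hT _ ih _ h

private lemma trans_in {V : Type*} {H A : V → Option V} {T : V → Prop}
    (hT : ∀ i, T i → ∀ j, Arc H i j → T j)
    (hA : ∀ i, T i → H i = A i) {i j : V}
    (h : Relation.TransGen (Arc H) i j) (hi : T i) : Relation.TransGen (Arc A) i j := by
  induction h with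
  | single h => exact TransGen.single (show A _ = _ by rw [← hA _ hi]; exact h)
  | tail hab hbc ih =>
      have hb := reach_closed hT hab hi
      exact TransGen.tail ih (show A _ = _ by rw [← hA _ hb]; exact hbc)

private lemma trans_out {V : Type*} {H B : V → Option V} {T : V → Prop}
    (hT : ∀ i, T i → ∀ j, Arc H i j → T j)
    (hB : ∀ i, ¬ T i → H i = B i) {i j : V}
    (h : Relation.TransGen (Arc H) i j) (hj : ¬ T j) (hi : ¬ T i) :
    Relation.TransGen (Arc B) i j := by
  induction h with
  | single h => exact TransGen.single (show B _ = _ by rw [← hB _ hi]; exact h)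
  | tail hab hbc ih =>
      have hb : ¬ T _ := fun hb => hj (hT _ hb _ hbc)
      exact TransGen.tail (ih hb) (show B _ = _ by rw [← hB _ hb]; exact hbc)

private lemma forest_of_closed {V : Type*} {H A B : V → Option V} {T : V → Prop}
    (hT : ∀ i, T i → ∀ j, Arc H i j → T j)
    (hA : ∀ i, T i → H i = A i) (hB : ∀ i, ¬ T i → H i = B i)
    (hAf : IsForest A) (hBf : IsForest B) : IsForest H := by
  intro i hcyc
  by_cases hi : T i
  · exact hAf i (trans_in hT hA hcyc hi)
  · exact hBf i (trans_out hT hB hcyc hi hi)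

/-- If `D` is the vertex set of a tree of the forest `F` (the tree with root `r`), then both
the `D`-exchange of `F` by `G` and the `D`-exchange of `G` by `F` are forests. -/
theorem exchange_isForest_of_treeSet {V : Type*} (F G : V → Option V) (r : V)
    (hF : IsForest F) (hG : IsForest G) (hr : F r = none) :
    IsForest (exchange (treeSet F r) F G) ∧ IsForest (exchange (treeSet F r) G F) := by
  constructor
  · -- vertices outside D keep F-arcs; the complement of D is closed under F
    refine forest_of_closed (T := fun i => i ∉ treeSet F r) (A := F) (B := G)
      ?_ ?_ ?_ hF hG
    · intro i hi j harc hj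
      have hFij : F i = some j := by
        have : exchange (treeSet F r) F G i = F i := by simp [exchange, hi]
        rwa [Arc, this] at harc
      exact hi (ReflTransGen.head hFij hj)
    · intro i hi; simp [exchange, hi]
    · intro i hi
      have hi' : i ∈ treeSet F r := not_not.mp hi
      simp [exchange, hi']
  · -- vertices in D keep F-arcs; D is closed under F (since F r = none)
    refine forest_of_closed (T := fun i => i ∈ treeSet F r) (A := F) (B := G)
      ?_ ?_ ?_ hF hG
    · intro i hi j harc
      have hFij : F i = some j := by
        have : exchange (treeSet F r) G F i = F i := by simp [exchange, hi]
        rwa [Arc, this] at harc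
      rcases (ReflTransGen.cases_head hi) with heq | ⟨k, hik, hkr⟩
      · subst heq; rw [hr] at hFij; exact absurd hFij (by simp)
      · have : k = j := Option.some.inj (hik ▸ hFij)
        exact this ▸ hkr
    · intro i hi; simp [exchange, hi]
    · intro i hi; simp [exchange, hi]
end

section
/- Let F and G be directed forests on the same vertex set with tree components T^F of F and T^G of G, and let D be the intersection of the vertex sets of T^F and T^G. Then the D-exchange of F by G and the D-exchange of G by F are both forests. -/
open Relation

lemma treeSet_step {V : Type*} (F : V → Option V) (r : V) (hr : F r = none)
    {i j : V} (hi : i ∈ treeSet F r) (h : F i = some j) : j ∈ treeSet F r := by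
  rcases Relation.ReflTransGen.cases_head hi with rfl | ⟨c, hc, hcr⟩
  · simp [hr] at h
  · have : c = j := by
      have : some c = some j := by rw [← hc, h]
      exact Option.some.inj this
    exact this ▸ hcr

open Classical in
noncomputable def ordX {V : Type*} (F G : V → Option V) (r s : V) (i : V) : ℕ :=
  if i ∈ treeSet F r then (if i ∈ treeSet G s then 1 else 2) else 0

lemma stepX {V : Type*} (F G : V → Option V) (r s : V) (hr : F r = none) (hs : G s = none)
    {i j : V} (h : Arc (exchange (treeSet F r ∩ treeSet G s) F G) i j) :
    ordX F G r s j ≤ ordX F G r s i ∧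
    (ordX F G r s j = ordX F G r s i →
      (ordX F G r s i = 1 → Arc G i j) ∧ (ordX F G r s i ≠ 1 → Arc F i j)) := by
  classical
  unfold Arc exchange at h
  by_cases hD : i ∈ treeSet F r ∩ treeSet G s
  · -- arc is a G-arc, i has ord 1
    rw [if_pos hD] at h
    have hiF : i ∈ treeSet F r := hD.1
    have hiG : i ∈ treeSet G s := hD.2
    have hjG : j ∈ treeSet G s := treeSet_step G s hs hiG h
    have hordi : ordX F G r s i = 1 := by simp [ordX, hiF, hiG]
    constructor
    · rw [hordi]
      by_cases hjF : j ∈ treeSet F r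
      · simp [ordX, hjF, hjG]
      · simp [ordX, hjF]
    · intro _
      exact ⟨fun _ => h, fun hne => absurd hordi hne⟩
  · rw [if_neg hD] at h
    by_cases hiF : i ∈ treeSet F r
    · -- i ∈ T_F \ T_G, ord 2, arc is F-arc, j stays in T_F
      have hiG : i ∉ treeSet G s := fun hg => hD ⟨hiF, hg⟩
      have hjF : j ∈ treeSet F r := treeSet_step F r hr hiF h
      have hordi : ordX F G r s i = 2 := by simp [ordX, hiF, hiG]
      constructor
      · rw [hordi]
        by_cases hjG : j ∈ treeSet G s
        · simp [ordX, hjF, hjG]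
        · simp [ordX, hjF, hjG]
      · intro heq
        rw [hordi] at heq ⊢
        exact ⟨fun h1 => by omega, fun _ => h⟩
    · -- i ∉ T_F, ord 0, arc is F-arc, j stays out of T_F
      have hordi : ordX F G r s i = 0 := by simp [ordX, hiF]
      have hjF : j ∉ treeSet F r := by
        intro hjF
        exact hiF (Relation.ReflTransGen.head h hjF)
      have hordj : ordX F G r s j = 0 := by simp [ordX, hjF]
      rw [hordi, hordj]
      exact ⟨le_refl _, fun _ => ⟨fun h1 => by omega, fun _ => h⟩⟩

lemma walkX {V : Type*} (F G : V → Option V) (r s : V) (hr : F r = none) (hs : G s = none)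
    {i j : V} (h : Relation.TransGen (Arc (exchange (treeSet F r ∩ treeSet G s) F G)) i j) :
    ordX F G r s j ≤ ordX F G r s i ∧
    (ordX F G r s j = ordX F G r s i →
      (ordX F G r s i = 1 → Relation.TransGen (Arc G) i j) ∧
      (ordX F G r s i ≠ 1 → Relation.TransGen (Arc F) i j)) := by
  induction h with
  | single hij =>
      obtain ⟨h1, h2⟩ := stepX F G r s hr hs hij
      exact ⟨h1, fun heq => ⟨fun h1' => .single ((h2 heq).1 h1'),
        fun h1' => .single ((h2 heq).2 h1')⟩⟩
  | tail hij hjk ih =>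
      obtain ⟨ih1, ih2⟩ := ih
      obtain ⟨s1, s2⟩ := stepX F G r s hr hs hjk
      refine ⟨le_trans s1 ih1, fun heq => ?_⟩
      have hmid : ordX F G r s _ = ordX F G r s i := le_antisymm ih1 (heq ▸ s1)
      have heq2 : ordX F G r s _ = ordX F G r s _ := heq.trans hmid.symm
      refine ⟨fun h1 => ?_, fun h1 => ?_⟩
      · exact ((ih2 hmid).1 h1).tail ((s2 heq2).1 (hmid.trans h1))
      · exact ((ih2 hmid).2 h1).tail ((s2 heq2).2 (fun hc => h1 (hmid ▸ hc)))

lemma keyX {V : Type*} (F G : V → Option V) (r s : V)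
    (hF : IsForest F) (hG : IsForest G) (hr : F r = none) (hs : G s = none) :
    IsForest (exchange (treeSet F r ∩ treeSet G s) F G) := by
  intro i hcyc
  obtain ⟨-, h2⟩ := walkX F G r s hr hs hcyc
  by_cases h1 : ordX F G r s i = 1
  · exact hG i ((h2 rfl).1 h1)
  · exact hF i ((h2 rfl).2 h1)

/-- If `D` is the intersection of the vertex sets of a tree of `F` (root `r`) and a tree of
`G` (root `s`), then the `D`-exchange of `F` by `G` and the `D`-exchange of `G` by `F` are
forests. -/
theorem exchange_isForest_of_inter_treeSets {V : Type*} (F G : V → Option V) (r s : V)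
    (hF : IsForest F) (hG : IsForest G) (hr : F r = none) (hs : G s = none) :
    IsForest (exchange (treeSet F r ∩ treeSet G s) F G) ∧
      IsForest (exchange (treeSet F r ∩ treeSet G s) G F) := by
  refine ⟨keyX F G r s hF hG hr hs, ?_⟩
  rw [Set.inter_comm]
  exact keyX G F s r hG hF hs hr
end

section
/- Let V be a weighted digraph on N vertices and suppose the set of spanning forests with exactly k trees is nonempty (1 ≤ k ≤ N-1). Then for every minimal-weight spanning forest F with k+1 trees there exists a minimal-weight spanning forest G with k trees such that the vertex set of every tree of F is contained in the vertex set of some tree of G. -/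
open Relation

section Weighted

variable {V : Type*} [Fintype V] [DecidableEq V]

/-- A spanning forest of the digraph with arc relation `A`. -/
def IsSpanningForest (A : V → V → Prop) (F : V → Option V) : Prop :=
  IsForest F ∧ ∀ i j, F i = some j → A i j

/-- The number of trees (= roots) of a forest. -/
def numTrees (F : V → Option V) : ℕ :=
  (Finset.univ.filter (fun i => F i = none)).card

/-- The weight of a forest: the sum of the weights of its arcs. -/
noncomputable def weight (w : V → V → ℝ) (F : V → Option V) : ℝ :=
  ∑ i, (F i).elim 0 (w i)

/-- `F` is a minimal-weight (extreme) spanning forest with `k` trees. -/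
def ExtremeForest (A : V → V → Prop) (w : V → V → ℝ) (k : ℕ) (F : V → Option V) : Prop :=
  IsSpanningForest A F ∧ numTrees F = k ∧
    ∀ G, IsSpanningForest A G → numTrees G = k → weight w F ≤ weight w G

/-- `φ_k`: the minimum weight of a spanning forest with exactly `k` trees. -/
noncomputable def phi (A : V → V → Prop) (w : V → V → ℝ) (k : ℕ) : ℝ :=
  sInf (weight w '' {F | IsSpanningForest A F ∧ numTrees F = k})

end Weighted

section Aux
open Finset
variable {V : Type*}

lemma root_stop {F : V → Option V} {i r : V} (hi : F i = none) (h : Reaches F i r) : i = r := by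
  rcases Relation.ReflTransGen.cases_head h with h | ⟨c, hc, _⟩
  · exact h
  · unfold Arc at hc; rw [hi] at hc; cases hc

lemma reaches_step {F : V → Option V} {i j r : V} (hr : F r = none) (hij : F i = some j)
    (h : Reaches F i r) : Reaches F j r := by
  rcases Relation.ReflTransGen.cases_head h with h | ⟨c, hc, hcr⟩
  · subst h; rw [hr] at hij; cases hij
  · unfold Arc at hc; rw [hij] at hc
    cases hc; exact hcr

lemma root_unique {F : V → Option V} {i r r' : V} (hr : F r = none) (hr' : F r' = none)
    (h : Reaches F i r) (h' : Reaches F i r') : r = r' := by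
  revert h'
  induction h using Relation.ReflTransGen.head_induction_on with
  | refl => intro h'; exact root_stop hr h'
  | @head a c h1 h2 ih =>
    intro h'
    rcases Relation.ReflTransGen.cases_head h' with rfl | ⟨c', hc', h''⟩
    · unfold Arc at h1; rw [hr'] at h1; cases h1
    · unfold Arc at h1 hc'; rw [h1] at hc'
      cases hc'; exact ih h''

lemma exists_root [Fintype V] {F : V → Option V} (hF : IsForest F) (i : V) :
    ∃ r, F r = none ∧ Reaches F i r := by
  classical
  suffices h : ∀ n (i : V), (univ.filter fun j => Relation.TransGen (Arc F) i j).card ≤ n →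
      ∃ r, F r = none ∧ Reaches F i r from h _ i le_rfl
  intro n
  induction n with
  | zero =>
    intro i hcard
    cases hFi : F i with
    | none => exact ⟨i, hFi, Relation.ReflTransGen.refl⟩
    | some j =>
      exfalso
      have hj : j ∈ univ.filter (fun x => Relation.TransGen (Arc F) i x) := by
        simp only [mem_filter, mem_univ, true_and]
        exact Relation.TransGen.single hFi
      have := Finset.card_pos.mpr ⟨j, hj⟩
      omega
  | succ n ih =>
    intro i hcard
    cases hFi : F i with
    | none => exact ⟨i, hFi, Relation.ReflTransGen.refl⟩
    | some j =>
      have harc : Arc F i j := hFi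
      have hj : j ∈ univ.filter fun x => Relation.TransGen (Arc F) i x := by
        simp only [mem_filter, mem_univ, true_and]
        exact Relation.TransGen.single harc
      have hsub : (univ.filter fun x => Relation.TransGen (Arc F) j x)
          ⊆ (univ.filter fun x => Relation.TransGen (Arc F) i x).erase j := by
        intro x hx
        simp only [mem_filter, mem_univ, true_and] at hx
        refine Finset.mem_erase.mpr ⟨?_, ?_⟩
        · rintro rfl; exact hF _ hx
        · simp only [mem_filter, mem_univ, true_and]
          exact Relation.TransGen.head harc hx
      have h1 := Finset.card_le_card hsub
      have h2 := Finset.card_erase_of_mem hj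
      have h3 := Finset.card_pos.mpr ⟨j, hj⟩
      obtain ⟨r, hr1, hr2⟩ := ih j (by omega)
      exact ⟨r, hr1, Relation.ReflTransGen.head harc hr2⟩

lemma isForest_glue {P : V → Prop} {A B X : V → Option V} (hA : IsForest A) (hB : IsForest B)
    (hP : ∀ i j, P i → A i = some j → P j)
    (hXP : ∀ i, P i → X i = A i) (hXN : ∀ i, ¬ P i → X i = B i) : IsForest X := by
  have transP : ∀ i j, Relation.TransGen (Arc X) i j → P i →
      Relation.TransGen (Arc A) i j ∧ P j := by
    intro i j h
    induction h with
    | single h =>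
      intro hPi
      rename_i b
      have hA' : A i = some b := by rw [← hXP i hPi]; exact h
      exact ⟨Relation.TransGen.single hA', hP _ _ hPi hA'⟩
    | tail h1 h2 ih =>
      intro hPi
      rename_i b c
      obtain ⟨t, hPb⟩ := ih hPi
      have hA' : A b = some c := by rw [← hXP _ hPb]; exact h2
      exact ⟨t.tail hA', hP _ _ hPb hA'⟩
  have transN : ∀ i j, Relation.TransGen (Arc X) i j → ¬ P j →
      Relation.TransGen (Arc B) i j := by
    intro i j h
    induction h with
    | single h =>
      intro hPj
      rename_i b
      by_cases hPi : P i
      · exact absurd (transP _ _ (Relation.TransGen.single h) hPi).2 hPj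
      · exact Relation.TransGen.single (show B i = some b by rw [← hXN i hPi]; exact h)
    | tail h1 h2 ih =>
      intro hPj
      rename_i b c
      by_cases hPb : P b
      · exfalso
        have hA' : A b = some c := by rw [← hXP b hPb]; exact h2
        exact hPj (hP _ _ hPb hA')
      · exact (ih hPb).tail (show B b = some c by rw [← hXN b hPb]; exact h2)
  intro i hcyc
  by_cases hPi : P i
  · exact hA i (transP _ _ hcyc hPi).1
  · exact hB i (transN _ _ hcyc hPi)
end Aux

section Aux2
open Finset
variable {V : Type*} [Fintype V] [DecidableEq V]

lemma weight_pair {w : V → V → ℝ} {P : V → Prop} {C D X Y : V → Option V}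
    (hXP : ∀ i, P i → X i = C i) (hXN : ∀ i, ¬ P i → X i = D i)
    (hYP : ∀ i, P i → Y i = D i) (hYN : ∀ i, ¬ P i → Y i = C i) :
    weight w X + weight w Y = weight w C + weight w D := by
  unfold weight
  rw [← Finset.sum_add_distrib, ← Finset.sum_add_distrib]
  refine Finset.sum_congr rfl fun i _ => ?_
  by_cases h : P i
  · rw [hXP i h, hYP i h]
  · rw [hXN i h, hYN i h]; exact add_comm _ _

end Aux2

open Finset in
/-- For every minimal-weight spanning forest `F` with `k+1` trees there is a minimal-weight
spanning forest `G` with `k` trees such that the vertex set of every tree of `F` is contained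
in the vertex set of some tree of `G`. -/
theorem extreme_descendant_exists {V : Type*} [Fintype V] [DecidableEq V]
    (A : V → V → Prop) (w : V → V → ℝ) (k : ℕ)
    (hk : 1 ≤ k) (hk' : k ≤ Fintype.card V - 1)
    (hEx : ∃ F, IsSpanningForest A F ∧ numTrees F = k)
    (F : V → Option V) (hF : ExtremeForest A w (k + 1) F) :
    ∃ G, ExtremeForest A w k G ∧
      ∀ r, F r = none → ∃ s, G s = none ∧ treeSet F r ⊆ treeSet G s := by
  classical
  obtain ⟨hFsf, hFk, hFmin⟩ := hF
  have hforestF : IsForest F := hFsf.1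
  -- pick a minimum-weight spanning forest with k trees, then among extreme ones
  -- pick one minimizing the number of arcs differing from F
  have hSEne : (Finset.univ.filter (fun G => ExtremeForest A w k G)).Nonempty := by
    obtain ⟨F0, hF0⟩ := hEx
    obtain ⟨G1, hG1mem, hG1min⟩ := (Finset.univ.filter
      (fun G => IsSpanningForest A G ∧ numTrees G = k)).exists_min_image (weight w)
      ⟨F0, by simp only [Finset.mem_filter, Finset.mem_univ, true_and]; exact hF0⟩
    simp only [Finset.mem_filter, Finset.mem_univ, true_and] at hG1mem hG1min
    exact ⟨G1, by
      simp only [Finset.mem_filter, Finset.mem_univ, true_and]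
      exact ⟨hG1mem.1, hG1mem.2, fun G' h1 h2 => hG1min G' ⟨h1, h2⟩⟩⟩
  obtain ⟨G, hGmem, hGmin⟩ := (Finset.univ.filter
      (fun G => ExtremeForest A w k G)).exists_min_image
    (fun G' => (Finset.univ.filter (fun i => ¬ G' i = F i)).card) hSEne
  simp only [Finset.mem_filter, Finset.mem_univ, true_and] at hGmem hGmin
  obtain ⟨hGsf, hGk, hGminW⟩ := hGmem
  have hforestG : IsForest G := hGsf.1
  have hGmin' : ∀ G', ExtremeForest A w k G' →
      (univ.filter fun i => ¬ G i = F i).card ≤ (univ.filter fun i => ¬ G' i = F i).card :=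
    fun G' hG' => hGmin G' hG'
  have hRF : (univ.filter fun i => F i = none).card = k + 1 := hFk
  have hRG : (univ.filter fun i => G i = none).card = k := hGk
  -- find a tree of F containing no root of G
  obtain ⟨r0, hr0, hr0'⟩ : ∃ r0, F r0 = none ∧ ∀ i, G i = none → ¬ Reaches F i r0 := by
    by_contra hcon
    push_neg at hcon
    have hf1 : ∀ i, F ((exists_root hforestF i).choose) = none :=
      fun i => (exists_root hforestF i).choose_spec.1
    have hf2 : ∀ i, Reaches F i ((exists_root hforestF i).choose) :=
      fun i => (exists_root hforestF i).choose_spec.2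
    have hsurj : Set.SurjOn (fun i => (exists_root hforestF i).choose)
        ↑(univ.filter fun i => G i = none) ↑(univ.filter fun i => F i = none) := by
      intro r hr
      simp only [coe_filter, Set.mem_setOf_eq, mem_univ, true_and] at hr ⊢
      obtain ⟨i, hi1, hi2⟩ := hcon r hr
      exact ⟨i, hi1, root_unique (hf1 i) hr (hf2 i) hi2⟩
    have := Finset.card_le_card_of_surjOn _ hsurj
    omega
  -- Exchange 1 : swap F and G on the tree of r0
  set X1 : V → Option V := fun i => if Reaches F i r0 then G i else F i with hX1def
  set X2 : V → Option V := fun i => if Reaches F i r0 then F i else G i with hX2def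
  have hX1P : ∀ i, Reaches F i r0 → X1 i = G i := fun i h => by
    simp only [hX1def]; exact if_pos h
  have hX1N : ∀ i, ¬ Reaches F i r0 → X1 i = F i := fun i h => by
    simp only [hX1def]; exact if_neg h
  have hX2P : ∀ i, Reaches F i r0 → X2 i = F i := fun i h => by
    simp only [hX2def]; exact if_pos h
  have hX2N : ∀ i, ¬ Reaches F i r0 → X2 i = G i := fun i h => by
    simp only [hX2def]; exact if_neg h
  have hX1forest : IsForest X1 :=
    isForest_glue (P := fun i => ¬ Reaches F i r0) hforestF hforestG
      (fun i j hi hij hj => hi (Relation.ReflTransGen.head hij hj)) hX1N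
      (fun i h => hX1P i (not_not.mp h))
  have hX2forest : IsForest X2 :=
    isForest_glue (P := fun i => Reaches F i r0) hforestF hforestG
      (fun i j hi hij => reaches_step hr0 hij hi) hX2P hX2N
  have hX1sf : IsSpanningForest A X1 := ⟨hX1forest, fun i j h => by
    by_cases hi : Reaches F i r0
    · exact hGsf.2 i j (by rw [← hX1P i hi]; exact h)
    · exact hFsf.2 i j (by rw [← hX1N i hi]; exact h)⟩
  have hX2sf : IsSpanningForest A X2 := ⟨hX2forest, fun i j h => by
    by_cases hi : Reaches F i r0
    · exact hFsf.2 i j (by rw [← hX2P i hi]; exact h)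
    · exact hGsf.2 i j (by rw [← hX2N i hi]; exact h)⟩
  have hrootsX1 : (univ.filter fun i => X1 i = none)
      = (univ.filter fun i => F i = none).erase r0 := by
    ext i
    simp only [mem_filter, mem_univ, true_and, mem_erase]
    by_cases hi : Reaches F i r0
    · rw [hX1P i hi]
      constructor
      · intro hGi; exact absurd hi (hr0' i hGi)
      · rintro ⟨hne, hFi⟩; exact absurd (root_stop hFi hi) hne
    · rw [hX1N i hi]
      constructor
      · intro hFi; exact ⟨by rintro rfl; exact hi Relation.ReflTransGen.refl, hFi⟩
      · exact fun h => h.2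
  have hrootsX2 : (univ.filter fun i => X2 i = none)
      = insert r0 (univ.filter fun i => G i = none) := by
    ext i
    simp only [mem_filter, mem_univ, true_and, mem_insert]
    by_cases hi : Reaches F i r0
    · rw [hX2P i hi]
      constructor
      · intro hFi; exact Or.inl (root_stop hFi hi)
      · rintro (rfl | hGi)
        · exact hr0
        · exact absurd hi (hr0' i hGi)
    · rw [hX2N i hi]
      constructor
      · exact fun h => Or.inr h
      · rintro (rfl | h)
        · exact absurd Relation.ReflTransGen.refl hi
        · exact h
  have hX1k : numTrees X1 = k := by
    show (univ.filter fun i => X1 i = none).card = k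
    rw [hrootsX1, Finset.card_erase_of_mem (by simp only [mem_filter, mem_univ, true_and]; exact hr0), hRF]
    omega
  have hX2k : numTrees X2 = k + 1 := by
    show (univ.filter fun i => X2 i = none).card = k + 1
    rw [hrootsX2, Finset.card_insert_of_notMem, hRG]
    simp only [mem_filter, mem_univ, true_and]
    exact fun h => hr0' r0 h Relation.ReflTransGen.refl
  have hWsum : weight w X1 + weight w X2 = weight w G + weight w F :=
    weight_pair hX1P hX1N hX2P hX2N
  have hle1 : weight w G ≤ weight w X1 := hGminW X1 hX1sf hX1k
  have hle2 : weight w F ≤ weight w X2 := hFmin X2 hX2sf hX2k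
  have hX1w : weight w X1 = weight w G := by linarith
  have hX1ext : ExtremeForest A w k X1 :=
    ⟨hX1sf, hX1k, fun G' h1' h2' => by rw [hX1w]; exact hGminW G' h1' h2'⟩
  -- (★): G differs from F only inside the tree of r0
  have hstar : ∀ i, ¬ G i = F i → Reaches F i r0 := by
    have hsub : (univ.filter fun i => ¬ X1 i = F i) ⊆
        (univ.filter fun i => (¬ G i = F i) ∧ Reaches F i r0) := by
      intro i hi
      simp only [mem_filter, mem_univ, true_and] at hi ⊢
      by_cases h : Reaches F i r0
      · rw [hX1P i h] at hi; exact ⟨hi, h⟩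
      · rw [hX1N i h] at hi; exact absurd rfl hi
    have hsub2 : (univ.filter fun i => (¬ G i = F i) ∧ Reaches F i r0) ⊆
        (univ.filter fun i => ¬ G i = F i) := by
      intro i hi
      simp only [mem_filter, mem_univ, true_and] at hi ⊢
      exact hi.1
    have hc1 := hGmin' X1 hX1ext
    have hc2 := Finset.card_le_card hsub
    have heq := Finset.eq_of_subset_of_card_le hsub2 (by omega)
    intro i hi
    have : i ∈ univ.filter fun i => ¬ G i = F i := by
      simp only [mem_filter, mem_univ, true_and]; exact hi
    rw [← heq] at this
    simp only [mem_filter, mem_univ, true_and] at this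
    exact this.2
  -- the roots of G are exactly the roots of F minus r0
  have hGnone : ∀ i, ¬ Reaches F i r0 → G i = F i :=
    fun i h => by by_contra hne; exact h (hstar i hne)
  -- conclusion
  refine ⟨G, ⟨hGsf, hGk, hGminW⟩, ?_⟩
  intro r hr
  by_cases hrr0 : r = r0
  · -- the tree of r0
    subst hrr0
    obtain ⟨s, hs1, hs2⟩ := exists_root hforestG r
    refine ⟨s, hs1, ?_⟩
    intro v hv
    simp only [treeSet, Set.mem_setOf_eq] at hv ⊢
    by_contra hbad
    obtain ⟨s1, hs11, hs12⟩ := exists_root hforestG v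
    have hs1ne : s1 ≠ s := fun h => hbad (h ▸ hs12)
    have hr0nD : ¬ Reaches G r s1 := fun h => hs1ne (root_unique hs11 hs1 h hs2)
    have hs1nr : ¬ Reaches F s1 r := hr0' s1 hs11
    have hFs1 : F s1 = none := by rw [← hGnone s1 hs1nr]; exact hs11
    -- a crossing vertex: inside the tree of r (for F) but with a different arc in G
    have hcross : ∃ x, Reaches G x s1 ∧ ¬ G x = F x := by
      clear hbad hs1ne hr0nD
      revert hv
      induction hs12 using Relation.ReflTransGen.head_induction_on with
      | refl => intro h; exact absurd h hs1nr
      | @head a c h1 h2 ih =>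
        intro hvT
        by_cases hc : Reaches F c r
        · exact ih hc
        · refine ⟨a, Relation.ReflTransGen.head h1 h2, ?_⟩
          intro heq
          have h1' : G a = some c := h1
          cases hFa : F a with
          | none => rw [hFa] at heq; rw [heq] at h1'; cases h1'
          | some z =>
            rw [hFa] at heq
            rw [heq] at h1'
            injection h1' with h'
            exact hc (h' ▸ reaches_step hr hFa hvT)
    obtain ⟨x, hx1, hx3⟩ := hcross
    -- Exchange 2 : swap F and G on the G-tree of s1
    set Y1 : V → Option V := fun i => if Reaches G i s1 then F i else G i with hY1def
    set Y2 : V → Option V := fun i => if Reaches G i s1 then G i else F i with hY2def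
    have hY1P : ∀ i, Reaches G i s1 → Y1 i = F i := fun i h => by
      simp only [hY1def]; exact if_pos h
    have hY1N : ∀ i, ¬ Reaches G i s1 → Y1 i = G i := fun i h => by
      simp only [hY1def]; exact if_neg h
    have hY2P : ∀ i, Reaches G i s1 → Y2 i = G i := fun i h => by
      simp only [hY2def]; exact if_pos h
    have hY2N : ∀ i, ¬ Reaches G i s1 → Y2 i = F i := fun i h => by
      simp only [hY2def]; exact if_neg h
    have hY1forest : IsForest Y1 :=
      isForest_glue (P := fun i => ¬ Reaches G i s1) hforestG hforestF
        (fun i j hi hij hj => hi (Relation.ReflTransGen.head hij hj)) hY1N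
        (fun i h => hY1P i (not_not.mp h))
    have hY2forest : IsForest Y2 :=
      isForest_glue (P := fun i => Reaches G i s1) hforestG hforestF
        (fun i j hi hij => reaches_step hs11 hij hi) hY2P hY2N
    have hY1sf : IsSpanningForest A Y1 := ⟨hY1forest, fun i j h => by
      by_cases hi : Reaches G i s1
      · exact hFsf.2 i j (by rw [← hY1P i hi]; exact h)
      · exact hGsf.2 i j (by rw [← hY1N i hi]; exact h)⟩
    have hY2sf : IsSpanningForest A Y2 := ⟨hY2forest, fun i j h => by
      by_cases hi : Reaches G i s1
      · exact hGsf.2 i j (by rw [← hY2P i hi]; exact h)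
      · exact hFsf.2 i j (by rw [← hY2N i hi]; exact h)⟩
    have hFG : ∀ i, Reaches G i s1 → (F i = none ↔ G i = none) := by
      intro i hi
      constructor
      · intro hFi
        have hir : i ≠ r := by rintro rfl; exact hr0nD hi
        have hnr' : ¬ Reaches F i r := fun h => hir (root_stop hFi h)
        rw [hGnone i hnr']; exact hFi
      · intro hGi
        have : i = s1 := root_stop hGi hi
        rw [this]; exact hFs1
    have hrootsY1 : (univ.filter fun i => Y1 i = none) = (univ.filter fun i => G i = none) := by
      ext i
      simp only [mem_filter, mem_univ, true_and]
      by_cases hi : Reaches G i s1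
      · rw [hY1P i hi]; exact hFG i hi
      · rw [hY1N i hi]
    have hrootsY2 : (univ.filter fun i => Y2 i = none) = (univ.filter fun i => F i = none) := by
      ext i
      simp only [mem_filter, mem_univ, true_and]
      by_cases hi : Reaches G i s1
      · rw [hY2P i hi]; exact (hFG i hi).symm
      · rw [hY2N i hi]
    have hY1k : numTrees Y1 = k := by
      show (univ.filter fun i => Y1 i = none).card = k
      rw [hrootsY1]; exact hRG
    have hY2k : numTrees Y2 = k + 1 := by
      show (univ.filter fun i => Y2 i = none).card = k + 1
      rw [hrootsY2]; exact hRF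
    have hWsumY : weight w Y2 + weight w Y1 = weight w G + weight w F :=
      weight_pair hY2P hY2N hY1P hY1N
    have hle1' : weight w G ≤ weight w Y1 := hGminW Y1 hY1sf hY1k
    have hle2' : weight w F ≤ weight w Y2 := hFmin Y2 hY2sf hY2k
    have hY1w : weight w Y1 = weight w G := by linarith
    have hY1ext : ExtremeForest A w k Y1 :=
      ⟨hY1sf, hY1k, fun G' h1' h2' => by rw [hY1w]; exact hGminW G' h1' h2'⟩
    have hdY : (univ.filter fun i => ¬ Y1 i = F i) ⊆
        ((univ.filter fun i => ¬ G i = F i)).erase x := by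
      intro i hi
      simp only [mem_filter, mem_univ, true_and] at hi
      rw [Finset.mem_erase]
      by_cases h : Reaches G i s1
      · rw [hY1P i h] at hi; exact absurd rfl hi
      · rw [hY1N i h] at hi
        refine ⟨?_, by simp only [mem_filter, mem_univ, true_and]; exact hi⟩
        rintro rfl; exact h hx1
    have hxmem : x ∈ univ.filter fun i => ¬ G i = F i := by
      simp only [mem_filter, mem_univ, true_and]; exact hx3
    have hlt := lt_of_le_of_lt (Finset.card_le_card hdY) (Finset.card_erase_lt_of_mem hxmem)
    exact absurd (hGmin' Y1 hY1ext) (not_le.mpr hlt)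
  · -- other trees: they are preserved verbatim
    have hnr : ¬ Reaches F r r0 := fun h => hrr0 (root_stop hr h)
    refine ⟨r, by rw [hGnone r hnr]; exact hr, ?_⟩
    intro i hi
    simp only [treeSet, Set.mem_setOf_eq] at hi ⊢
    induction hi using Relation.ReflTransGen.head_induction_on with
    | refl => exact Relation.ReflTransGen.refl
    | @head a c h1 h2 ih =>
      have hnra : ¬ Reaches F a r0 := by
        intro h
        exact hrr0 (root_unique hr0 hr h (Relation.ReflTransGen.head h1 h2)).symm
      exact Relation.ReflTransGen.head (show G a = some c by rw [hGnone a hnra]; exact h1) ih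
end

section
/- Let V be a weighted digraph, F a minimal-weight spanning forest with n trees and G a minimal-weight spanning forest with m trees, m ≥ n. Let D be a subset of vertices such that the D-exchange P of F by G and the D-exchange Q of G by F are forests. If D contains l ≥ 0 more roots of F than roots of G, then P is a minimal-weight spanning forest with n - l trees and Q is a minimal-weight spanning forest with m + l trees. -/
open Relation

set_option linter.unusedSectionVars false

section AuxProof
variable {V : Type*} [Fintype V] [DecidableEq V]

lemma forest_wf {K : V → Option V} (hK : IsForest K) :
    WellFounded (fun a b => Relation.TransGen (Arc K) b a) := by
  have ht : IsTrans V (fun a b => Relation.TransGen (Arc K) b a) :=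
    ⟨fun a b c h1 h2 => h2.trans h1⟩
  have hirr : IsIrrefl V (fun a b => Relation.TransGen (Arc K) b a) := ⟨fun a h => hK a h⟩
  exact Finite.wellFounded_of_trans_of_irrefl _

lemma forest_exists_root {K : V → Option V} (hK : IsForest K) (i : V) :
    ∃ r, Reaches K i r ∧ K r = none := by
  refine (forest_wf hK).induction (C := fun i => ∃ r, Reaches K i r ∧ K r = none) i ?_
  intro i IH
  cases h : K i with
  | none => exact ⟨i, Relation.ReflTransGen.refl, h⟩
  | some j =>
    obtain ⟨r, hr, hroot⟩ := IH j (Relation.TransGen.single (show Arc K i j from h))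
    exact ⟨r, Relation.ReflTransGen.head (show Arc K i j from h) hr, hroot⟩

lemma forest_root_unique {K : V → Option V} (hK : IsForest K) (i : V) :
    ∀ r1 r2, Reaches K i r1 → K r1 = none → Reaches K i r2 → K r2 = none → r1 = r2 := by
  refine (forest_wf hK).induction (C := fun i => ∀ r1 r2, Reaches K i r1 → K r1 = none → Reaches K i r2 → K r2 = none → r1 = r2) i ?_
  intro i IH r1 r2 h1 e1 h2 e2
  cases hK0 : K i with
  | none =>
    rcases h1.cases_head with rfl | ⟨c, hc, _⟩
    · rcases h2.cases_head with rfl | ⟨c, hc, _⟩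
      · rfl
      · exact absurd (show K i = some c from hc) (by simp [hK0])
    · exact absurd (show K i = some c from hc) (by simp [hK0])
  | some j =>
    have step : ∀ r, Reaches K i r → K r = none → Reaches K j r := by
      intro r hr er
      rcases hr.cases_head with rfl | ⟨c, hc, htail⟩
      · exact absurd hK0 (by simp [er])
      · have hcj : c = j := by
          have h' : K i = some c := hc
          rw [hK0] at h'
          exact (Option.some.inj h').symm
        exact hcj ▸ htail
    exact IH j (Relation.TransGen.single (show Arc K i j from hK0)) r1 r2
      (step r1 h1 e1) e1 (step r2 h2 e2) e2

noncomputable def rootOf {K : V → Option V} (hK : IsForest K) (i : V) : V :=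
  (forest_exists_root hK i).choose

lemma rootOf_reaches {K : V → Option V} (hK : IsForest K) (i : V) :
    Reaches K i (rootOf hK i) := (forest_exists_root hK i).choose_spec.1

lemma rootOf_none {K : V → Option V} (hK : IsForest K) (i : V) :
    K (rootOf hK i) = none := (forest_exists_root hK i).choose_spec.2

lemma rootOf_arc {K : V → Option V} (hK : IsForest K) {i j : V} (h : K i = some j) :
    rootOf hK i = rootOf hK j :=
  forest_root_unique hK i _ _ (rootOf_reaches hK i) (rootOf_none hK i)
    (Relation.ReflTransGen.head (show Arc K i j from h) (rootOf_reaches hK j)) (rootOf_none hK j)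

lemma rootOf_eq_self {K : V → Option V} (hK : IsForest K) {r : V} (h : K r = none) :
    rootOf hK r = r :=
  forest_root_unique hK r _ _ (rootOf_reaches hK r) (rootOf_none hK r)
    Relation.ReflTransGen.refl h

end AuxProof

section AuxProof2
variable {V : Type*} [Fintype V] [DecidableEq V]

lemma exchange_isForest {F G : V → Option V} (hF : IsForest F) (hG : IsForest G)
    (D : Set V) (hcl : ∀ i ∈ D, ∀ j, G i = some j → j ∈ D) :
    IsForest (exchange D F G) := by
  classical
  set M := exchange D F G with hM
  have harc : ∀ i j, Arc M i j → (i ∈ D ∧ Arc G i j ∧ j ∈ D) ∨ (i ∉ D ∧ Arc F i j) := by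
    intro i j h
    by_cases hi : i ∈ D
    · left
      have hg : G i = some j := by simpa [M, exchange, hi, Arc] using h
      exact ⟨hi, hg, hcl i hi j hg⟩
    · right
      exact ⟨hi, by simpa [M, exchange, hi, Arc] using h⟩
  have L1 : ∀ v w, Relation.TransGen (Arc M) v w → v ∈ D →
      w ∈ D ∧ Relation.TransGen (Arc G) v w := by
    intro v w h
    induction h with
    | single h =>
      intro hv
      rcases harc _ _ h with ⟨_, hg, hw⟩ | ⟨hv', _⟩
      · exact ⟨hw, .single hg⟩
      · exact absurd hv hv'
    | tail h1 h2 ih =>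
      intro hv
      obtain ⟨hu, hG1⟩ := ih hv
      rcases harc _ _ h2 with ⟨_, hg, hw⟩ | ⟨hu', _⟩
      · exact ⟨hw, hG1.tail hg⟩
      · exact absurd hu hu'
  have C : ∀ v w, Relation.TransGen (Arc M) v w → w ∈ D ∨ Relation.TransGen (Arc F) v w := by
    intro v w h
    induction h with
    | single h =>
      rcases harc _ _ h with ⟨_, _, hw⟩ | ⟨_, hf⟩
      · exact Or.inl hw
      · exact Or.inr (.single hf)
    | tail h1 h2 ih =>
      rcases harc _ _ h2 with ⟨hu, _, hw⟩ | ⟨hu', hf⟩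
      · exact Or.inl hw
      · rcases ih with hu | hF1
        · exact absurd hu hu'
        · exact Or.inr (hF1.tail hf)
  intro i hcyc
  by_cases hi : i ∈ D
  · exact hG i (L1 i i hcyc hi).2
  · rcases C i i hcyc with h | h
    · exact hi h
    · exact hF i h

lemma exchange_compl (D : Set V) (F G : V → Option V) :
    exchange (Dᶜ) G F = exchange D F G := by
  funext i
  by_cases hi : i ∈ D <;> simp [exchange, hi]

lemma weight_exchange_add (w : V → V → ℝ) (D : Set V) (F G : V → Option V) :
    weight w (exchange D F G) + weight w (exchange D G F) = weight w F + weight w G := by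
  unfold weight
  rw [← Finset.sum_add_distrib, ← Finset.sum_add_distrib]
  refine Finset.sum_congr rfl fun i _ => ?_
  by_cases hi : i ∈ D <;> simp [exchange, hi] <;> ring

lemma numTrees_exchange (D : Set V) [DecidablePred (· ∈ D)] (F G : V → Option V) :
    numTrees (exchange D F G) =
      (Finset.univ.filter (fun i => i ∈ D ∧ G i = none)).card +
      (Finset.univ.filter (fun i => i ∉ D ∧ F i = none)).card := by
  classical
  unfold numTrees
  rw [← Finset.card_union_of_disjoint (by
    refine Finset.disjoint_left.mpr ?_
    intro a h1 h2
    simp only [Finset.mem_filter] at h1 h2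
    exact h2.2.1 h1.2.1)]
  congr 1
  ext i
  by_cases hi : i ∈ D <;> simp only [Finset.mem_union, Finset.mem_filter, Finset.mem_univ, true_and] <;> simp [exchange, hi]

lemma numTrees_split (D : Set V) [DecidablePred (· ∈ D)] (F : V → Option V) :
    numTrees F = (Finset.univ.filter (fun i => i ∈ D ∧ F i = none)).card +
      (Finset.univ.filter (fun i => i ∉ D ∧ F i = none)).card := by
  classical
  unfold numTrees
  rw [← Finset.card_union_of_disjoint (by
    refine Finset.disjoint_left.mpr ?_
    intro a h1 h2
    simp only [Finset.mem_filter] at h1 h2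
    exact h2.2.1 h1.2.1)]
  congr 1
  ext i
  by_cases hi : i ∈ D <;> simp [hi] <;> tauto

lemma exists_subset_card :
    ∀ (N : ℕ) (R : Finset V) (h : V → ℕ) (l : ℕ), R.card ≤ N →
      (∑ r ∈ R, h r) + l ≤ R.card → ∃ S ⊆ R, S.card = (∑ r ∈ S, h r) + l := by
  intro N
  induction N with
  | zero =>
    intro R h l hN hle
    refine ⟨∅, Finset.empty_subset R, ?_⟩
    simp
    omega
  | succ N ih =>
    intro R h l hN hle
    rcases Nat.eq_zero_or_pos l with rfl | hl
    · exact ⟨∅, Finset.empty_subset R, by simp⟩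
    have hR : R.Nonempty := by
      rw [← Finset.card_pos]; omega
    obtain ⟨r, hr⟩ := hR
    have hsum : (∑ x ∈ R.erase r, h x) + h r = ∑ x ∈ R, h x := Finset.sum_erase_add R h hr
    have hcardE : (R.erase r).card = R.card - 1 := Finset.card_erase_of_mem hr
    rcases Nat.eq_zero_or_pos (h r) with hr0 | hr1
    · obtain ⟨S, hS, hcard⟩ := ih (R.erase r) h (l - 1) (by omega) (by omega)
      have hrS : r ∉ S := fun hrs => (Finset.mem_erase.1 (hS hrs)).1 rfl
      refine ⟨insert r S, ?_, ?_⟩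
      · intro x hx
        rcases Finset.mem_insert.1 hx with rfl | hx
        · exact hr
        · exact (Finset.erase_subset r R) (hS hx)
      · rw [Finset.card_insert_of_notMem hrS, Finset.sum_insert hrS, hr0]
        omega
    · obtain ⟨S, hS, hcard⟩ := ih (R.erase r) h l (by omega) (by omega)
      exact ⟨S, hS.trans (Finset.erase_subset r R), hcard⟩

end AuxProof2

section AuxProof3
variable {V : Type*} [Fintype V] [DecidableEq V]

open Classical in
lemma exchange_step (A : V → V → Prop) (w : V → V → ℝ) (H K : V → Option V)
    (hH : IsSpanningForest A H) (hK : IsSpanningForest A K) (l : ℕ)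
    (hle : numTrees H + l ≤ numTrees K) :
    ∃ P' Q', IsSpanningForest A P' ∧ IsSpanningForest A Q' ∧
      numTrees P' = numTrees H + l ∧ numTrees Q' + l = numTrees K ∧
      weight w P' + weight w Q' = weight w H + weight w K := by
  classical
  obtain ⟨hKf, hKA⟩ := hK
  obtain ⟨hHf, hHA⟩ := hH
  set R : Finset V := Finset.univ.filter (fun r => K r = none) with hR
  set h : V → ℕ := fun r => (Finset.univ.filter (fun i => H i = none ∧ rootOf hKf i = r)).card
    with hh
  have hRK : R.card = numTrees K := rfl
  have htot : ∑ r ∈ R, h r = numTrees H := by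
    rw [numTrees]
    rw [Finset.card_eq_sum_card_fiberwise (f := rootOf hKf) (t := R)
      (fun x _ => by simp [hR, rootOf_none hKf x])]
    refine Finset.sum_congr rfl fun r _ => ?_
    refine congrArg Finset.card ?_
    ext i
    simp only [Finset.mem_filter, Finset.mem_univ, true_and]
  obtain ⟨S, hS, hcardS⟩ := exists_subset_card R.card R h l le_rfl (by omega)
  set D : Set V := {i | rootOf hKf i ∈ S} with hD
  haveI : DecidablePred (· ∈ D) := fun i => decidable_of_iff (rootOf hKf i ∈ S) (by simp [hD])
  have hclD : ∀ i ∈ D, ∀ j, K i = some j → j ∈ D := by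
    intro i hi j hij
    have : rootOf hKf i = rootOf hKf j := rootOf_arc hKf hij
    simpa [hD, ← this] using hi
  have hclDc : ∀ i ∈ Dᶜ, ∀ j, K i = some j → j ∈ Dᶜ := by
    intro i hi j hij
    have : rootOf hKf i = rootOf hKf j := rootOf_arc hKf hij
    simpa [hD, ← this] using hi
  have hPf : IsForest (exchange D H K) := exchange_isForest hHf hKf D hclD
  have hQf : IsForest (exchange D K H) := by
    rw [← exchange_compl D K H]
    exact exchange_isForest hHf hKf Dᶜ hclDc
  have hspan : ∀ (X Y : V → Option V), (∀ i j, X i = some j → A i j) →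
      (∀ i j, Y i = some j → A i j) → ∀ i j, exchange D X Y i = some j → A i j := by
    intro X Y hX hY i j hij
    by_cases hi : i ∈ D
    · exact hY i j (by simpa [exchange, hi] using hij)
    · exact hX i j (by simpa [exchange, hi] using hij)
  -- counting
  have c1 : (Finset.univ.filter (fun i => i ∈ D ∧ K i = none)).card = S.card := by
    refine congrArg Finset.card ?_
    ext i
    simp only [Finset.mem_filter, Finset.mem_univ, true_and, hD, Set.mem_setOf_eq]
    constructor
    · rintro ⟨h1, h2⟩
      rwa [rootOf_eq_self hKf h2] at h1
    · intro hiS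
      have hiR := hS hiS
      simp only [hR, Finset.mem_filter] at hiR
      exact ⟨by rwa [rootOf_eq_self hKf hiR.2], hiR.2⟩
  have c2 : (Finset.univ.filter (fun i => i ∈ D ∧ H i = none)).card = ∑ r ∈ S, h r := by
    rw [Finset.card_eq_sum_card_fiberwise (f := rootOf hKf) (t := S)
      (fun x hx => by
        exact (Finset.mem_filter.1 hx).2.1)]
    refine Finset.sum_congr rfl fun r hr => ?_
    refine congrArg Finset.card ?_
    ext i
    simp only [Finset.mem_filter, Finset.mem_univ, true_and, hD, Set.mem_setOf_eq, hh]
    constructor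
    · rintro ⟨⟨h1, h2⟩, h3⟩
      exact ⟨h2, h3⟩
    · rintro ⟨h1, h2⟩
      exact ⟨⟨h2 ▸ hr, h1⟩, h2⟩
  have hsplitH := numTrees_split D H
  have hsplitK := numTrees_split D K
  have hntP := numTrees_exchange D H K
  have hntQ := numTrees_exchange D K H
  refine ⟨exchange D H K, exchange D K H, ⟨hPf, hspan H K hHA hKA⟩, ⟨hQf, hspan K H hKA hHA⟩,
    by omega, by omega, weight_exchange_add w D H K⟩

end AuxProof3

/-- Proposition 3(a): if `D` contains `l ≥ 0` more roots of `F` than roots of `G`, and both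
`D`-exchanges are forests, then the `D`-exchange of `F` by `G` is a minimal-weight spanning
forest with `n - l` trees and the `D`-exchange of `G` by `F` is a minimal-weight spanning
forest with `m + l` trees. -/
theorem exchange_extreme_of_more_F_roots {V : Type*} [Fintype V] [DecidableEq V]
    (A : V → V → Prop) (w : V → V → ℝ) (n m l : ℕ) (hnm : n ≤ m)
    (F G : V → Option V) (hF : ExtremeForest A w n F) (hG : ExtremeForest A w m G)
    (D : Finset V)
    (hP : IsForest (exchange (↑D) F G)) (hQ : IsForest (exchange (↑D) G F))
    (hcount : (D.filter (fun i => F i = none)).card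
      = (D.filter (fun i => G i = none)).card + l) :
    ExtremeForest A w (n - l) (exchange (↑D) F G) ∧
      ExtremeForest A w (m + l) (exchange (↑D) G F) := by
  classical
  haveI hdec : DecidablePred (· ∈ (↑D : Set V)) := fun i => decidable_of_iff (i ∈ D) (by simp)
  obtain ⟨⟨hFf, hFA⟩, hFn, hFmin⟩ := hF
  obtain ⟨⟨hGf, hGA⟩, hGn, hGmin⟩ := hG
  set P := exchange (↑D : Set V) F G with hPdef
  set Q := exchange (↑D : Set V) G F with hQdef
  have hspanP : IsSpanningForest A P := by
    refine ⟨hP, ?_⟩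
    intro i j hij
    by_cases hi : i ∈ (↑D : Set V)
    · exact hGA i j (by simpa [hPdef, exchange, hi] using hij)
    · exact hFA i j (by simpa [hPdef, exchange, hi] using hij)
  have hspanQ : IsSpanningForest A Q := by
    refine ⟨hQ, ?_⟩
    intro i j hij
    by_cases hi : i ∈ (↑D : Set V)
    · exact hFA i j (by simpa [hQdef, exchange, hi] using hij)
    · exact hGA i j (by simpa [hQdef, exchange, hi] using hij)
  have hntP := numTrees_exchange (↑D : Set V) F G
  have hntQ := numTrees_exchange (↑D : Set V) G F
  rw [← hPdef] at hntP
  rw [← hQdef] at hntQ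
  have hsF := numTrees_split (↑D : Set V) F
  have hsG := numTrees_split (↑D : Set V) G
  have hcF : (Finset.univ.filter (fun i => i ∈ (↑D : Set V) ∧ F i = none)).card
      = (D.filter (fun i => F i = none)).card := by
    refine congrArg Finset.card ?_
    ext i
    simp
  have hcG : (Finset.univ.filter (fun i => i ∈ (↑D : Set V) ∧ G i = none)).card
      = (D.filter (fun i => G i = none)).card := by
    refine congrArg Finset.card ?_
    ext i
    simp
  have hln : l ≤ n := by omega
  have hPn : numTrees P = n - l := by omega
  have hQm : numTrees Q = m + l := by omega
  refine ⟨⟨hspanP, hPn, ?_⟩, ⟨hspanQ, hQm, ?_⟩⟩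
  · intro H hH hHn
    have hwsum := weight_exchange_add w (↑D : Set V) F G
    obtain ⟨P', Q', hP's, hQ's, hP'n, hQ'n, hw⟩ :=
      exchange_step A w H Q hH hspanQ l (by omega)
    have h1 := hFmin P' hP's (by omega)
    have h2 := hGmin Q' hQ's (by omega)
    rw [← hPdef, ← hQdef] at hwsum
    linarith
  · intro K hK hKn
    have hwsum := weight_exchange_add w (↑D : Set V) F G
    obtain ⟨P', Q', hP's, hQ's, hP'n, hQ'n, hw⟩ :=
      exchange_step A w P K hspanP hK l (by omega)
    have h1 := hFmin P' hP's (by omega)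
    have h2 := hGmin Q' hQ's (by omega)
    rw [← hPdef, ← hQdef] at hwsum
    linarith
end

section
/- Let V be a weighted digraph on vertex set N, and for each k let A_k be the algebra of subsets of N generated by the vertex sets of the trees of all minimal-weight spanning forests with k trees. Then the sequence of algebras is increasing: A_1 = {∅, N} ⊆ A_2 ⊆ … ⊆ A_{N-1} ⊆ A_N = 2^N. -/
open Relation

section Algebras

variable {V : Type*} [Fintype V] [DecidableEq V]

/-- The generating family of `A_k`: vertex sets of trees of minimal-weight spanning
`k`-forests. -/
def genSets (A : V → V → Prop) (w : V → V → ℝ) (k : ℕ) : Set (Set V) :=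
  {S | ∃ F r, ExtremeForest A w k F ∧ F r = none ∧ S = treeSet F r}

/-- The algebra `A_k` of subsets of the vertex set generated by the vertex sets of trees of
minimal-weight spanning `k`-forests. -/
noncomputable def alg (A : V → V → Prop) (w : V → V → ℝ) (k : ℕ) : MeasurableSpace V :=
  MeasurableSpace.generateFrom (genSets A w k)

/-- `E` is an elementary set (atom) of the algebra `m`. -/
def IsElementary (m : MeasurableSpace V) (E : Set V) : Prop :=
  @MeasurableSet V m E ∧ E.Nonempty ∧ ∀ S, @MeasurableSet V m S → S ⊆ E → S = ∅ ∨ S = E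

/-- `i` is a marked vertex of level `k`: a root of some minimal-weight spanning `k`-forest. -/
def IsMarked (A : V → V → Prop) (w : V → V → ℝ) (k : ℕ) (i : V) : Prop :=
  ∃ F, ExtremeForest A w k F ∧ F i = none

end Algebras

set_option linter.unusedSectionVars false
set_option maxHeartbeats 1000000

namespace ForestAux

variable {V : Type*} [Fintype V] [DecidableEq V]
variable {F G : V → Option V} {i j r r₁ r₂ s x y : V}

/-- step off a reach to a root -/
lemma reaches_step (h : Reaches F i r) (hr : F r = none) (hi : F i = some j) :
    Reaches F j r := by
  rcases h.cases_head with h | ⟨c, hc, h'⟩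
  · subst h; rw [hr] at hi; exact absurd hi (by simp)
  · have : c = j := by
      have := hc; unfold Arc at this; rw [hi] at this; exact (Option.some_injective _ this.symm)
    subst this; exact h'

lemma root_unique (hr₁ : F r₁ = none) (hr₂ : F r₂ = none)
    (h₁ : Reaches F i r₁) (h₂ : Reaches F i r₂) : r₁ = r₂ := by
  induction h₁ using Relation.ReflTransGen.head_induction_on with
  | refl =>
    rcases h₂.cases_head with h | ⟨c, hc, _⟩
    · exact h
    · unfold Arc at hc; rw [hr₁] at hc; exact absurd hc (by simp)
  | head h' hh ih =>
    exact ih (reaches_step h₂ hr₂ h')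

lemma exists_root (hF : IsForest F) (i : V) : ∃ r, Reaches F i r ∧ F r = none := by
  classical
  suffices H : ∀ n (i : V), (Finset.univ.filter (fun j => Reaches F i j)).card ≤ n →
      ∃ r, Reaches F i r ∧ F r = none by
    exact H _ i le_rfl
  intro n
  induction n with
  | zero =>
    intro i h
    exfalso
    have hmem : i ∈ Finset.univ.filter (fun j => Reaches F i j) := by
      simp only [Finset.mem_filter, Finset.mem_univ, true_and]
      exact Relation.ReflTransGen.refl
    have := Finset.card_pos.mpr ⟨i, hmem⟩
    omega
  | succ n ih =>
    intro i h
    cases hFi : F i with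
    | none => exact ⟨i, Relation.ReflTransGen.refl, hFi⟩
    | some j =>
      have hsub : (Finset.univ.filter (fun k => Reaches F j k)) ⊂
          (Finset.univ.filter (fun k => Reaches F i k)) := by
        constructor
        · intro k hk
          simp only [Finset.mem_filter, Finset.mem_univ, true_and] at hk ⊢
          exact Relation.ReflTransGen.head (by exact hFi : Arc F i j) hk
        · intro hsub'
          have hij : i ∈ Finset.univ.filter (fun k => Reaches F j k) := by
            apply hsub'
            simp only [Finset.mem_filter, Finset.mem_univ, true_and]
            exact Relation.ReflTransGen.refl
          simp only [Finset.mem_filter, Finset.mem_univ, true_and] at hij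
          exact hF i (Relation.TransGen.head' (by exact hFi : Arc F i j) hij)
      have hlt := Finset.card_lt_card hsub
      obtain ⟨r, hr, hrn⟩ := ih j (by omega)
      exact ⟨r, Relation.ReflTransGen.head (by exact hFi : Arc F i j) hr, hrn⟩

open Classical in
noncomputable def rootTo (F : V → Option V) (i : V) : V :=
  if h : ∃ r, Reaches F i r ∧ F r = none then h.choose else i

lemma rootTo_spec (hF : IsForest F) (i : V) :
    Reaches F i (rootTo F i) ∧ F (rootTo F i) = none := by
  have h := exists_root hF i
  rw [rootTo, dif_pos h]
  exact h.choose_spec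

lemma rootTo_eq (hF : IsForest F) (h : Reaches F i r) (hr : F r = none) :
    rootTo F i = r :=
  root_unique (rootTo_spec hF i).2 hr (rootTo_spec hF i).1 h

lemma rootTo_of_none (hF : IsForest F) (hr : F i = none) : rootTo F i = i :=
  rootTo_eq hF Relation.ReflTransGen.refl hr

lemma reaches_of_none (h : Reaches F r j) (hr : F r = none) : j = r := by
  rcases h.cases_head with h | ⟨c, hc, _⟩
  · exact h.symm
  · unfold Arc at hc; rw [hr] at hc; exact absurd hc (by simp)



section Exchange
variable {V : Type*} [Fintype V] [DecidableEq V]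
variable {U : Set V} {F G : V → Option V} {i j x y : V}

lemma exchange_mem (hx : x ∈ U) : exchange U F G x = G x := if_pos hx
lemma exchange_not_mem (hx : x ∉ U) : exchange U F G x = F x := if_neg hx

lemma exchange_flip : exchange U F G = exchange Uᶜ G F := by
  funext i
  by_cases h : i ∈ U
  · rw [exchange_mem h, exchange_not_mem (by simpa using h)]
  · rw [exchange_not_mem h, exchange_mem (by simpa using h)]

lemma arc_exchange_mem (hx : x ∈ U) (h : Arc (exchange U F G) x y) : G x = some y := by
  have h' : exchange U F G x = some y := h
  rwa [exchange_mem hx] at h'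

lemma arc_exchange_not_mem (hx : x ∉ U) (h : Arc (exchange U F G) x y) : F x = some y := by
  have h' : exchange U F G x = some y := h
  rwa [exchange_not_mem hx] at h'

/-- If `U` is closed under the inner dynamics `G`, the exchange is a forest. -/
lemma exchange_isForest (hF : IsForest F) (hG : IsForest G)
    (hU : ∀ x ∈ U, ∀ y, G x = some y → y ∈ U) : IsForest (exchange U F G) := by
  have hin : ∀ x y, TransGen (Arc (exchange U F G)) x y → x ∈ U →
      TransGen (Arc G) x y ∧ y ∈ U := by
    intro x y h
    induction h with
    | @single b harc =>
      intro hx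
      have harc' : G x = some b := arc_exchange_mem hx harc
      exact ⟨TransGen.single harc', hU x hx b harc'⟩
    | @tail b c hxb harc ih =>
      intro hx
      obtain ⟨ht, hb⟩ := ih hx
      have harc' : G b = some c := arc_exchange_mem hb harc
      exact ⟨TransGen.tail ht harc', hU b hb c harc'⟩
  have hout : ∀ x y, TransGen (Arc (exchange U F G)) x y → y ∉ U →
      TransGen (Arc F) x y ∧ x ∉ U := by
    intro x y h
    induction h with
    | @single b harc =>
      intro hy
      by_cases hx : x ∈ U
      · have harc' : G x = some b := arc_exchange_mem hx harc
        exact absurd (hU x hx b harc') hy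
      · have harc' : F x = some b := arc_exchange_not_mem hx harc
        exact ⟨TransGen.single harc', hx⟩
    | @tail b c hxb harc ih =>
      intro hy
      by_cases hb : b ∈ U
      · have harc' : G b = some c := arc_exchange_mem hb harc
        exact absurd (hU b hb c harc') hy
      · have harc' : F b = some c := arc_exchange_not_mem hb harc
        obtain ⟨ht, hx⟩ := ih hb
        exact ⟨TransGen.tail ht harc', hx⟩
  intro i hi
  by_cases h : i ∈ U
  · exact hG i (hin i i hi h).1
  · exact hF i (hout i i hi h).1

lemma exchange_isForest' (hF : IsForest F) (hG : IsForest G)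
    (hU : ∀ x, x ∉ U → ∀ y, F x = some y → y ∉ U) : IsForest (exchange U F G) := by
  rw [exchange_flip]
  exact exchange_isForest hG hF (fun x hx y hy => by
    exact hU x (by simpa using hx) y hy)

lemma treeSet_closed {s : V} (hs : G s = none) (hx : x ∈ treeSet G s)
    (hxy : G x = some y) : y ∈ treeSet G s :=
  reaches_step hx hs hxy

open Classical in
lemma numTrees_exchange :
    numTrees (exchange U F G) =
      (Finset.univ.filter (fun i => i ∈ U ∧ G i = none)).card +
      (Finset.univ.filter (fun i => i ∉ U ∧ F i = none)).card := by
  classical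
  unfold numTrees
  rw [← Finset.card_union_of_disjoint]
  · congr 1
    ext i
    simp only [Finset.mem_filter, Finset.mem_univ, true_and, Finset.mem_union]
    by_cases h : i ∈ U
    · rw [exchange_mem h]; tauto
    · rw [exchange_not_mem h]; tauto
  · rw [Finset.disjoint_left]
    intro a ha hb
    simp only [Finset.mem_filter] at ha hb
    exact hb.2.1 ha.2.1

lemma weight_exchange_add (w : V → V → ℝ) :
    weight w (exchange U F G) + weight w (exchange U G F) = weight w F + weight w G := by
  classical
  unfold weight
  rw [← Finset.sum_add_distrib, ← Finset.sum_add_distrib]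
  apply Finset.sum_congr rfl
  intro i _
  by_cases h : i ∈ U
  · rw [exchange_mem h, exchange_mem h]; ring
  · rw [exchange_not_mem h, exchange_not_mem h]

lemma exchange_spanning {A : V → V → Prop} (hF : ∀ i j, F i = some j → A i j)
    (hG : ∀ i j, G i = some j → A i j) :
    ∀ i j, exchange U F G i = some j → A i j := by
  intro i j h
  by_cases hi : i ∈ U
  · rw [exchange_mem hi] at h; exact hG i j h
  · rw [exchange_not_mem hi] at h; exact hF i j h

end Exchange

section Refine
variable {V : Type*} [Fintype V] [DecidableEq V]
variable {A : V → V → Prop} {w : V → V → ℝ} {k : ℕ} {F G : V → Option V}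

lemma pair_extreme (hF : ExtremeForest A w k F) (hG : ExtremeForest A w (k+1) G)
    {X Y : V → Option V} (hX : IsSpanningForest A X) (hY : IsSpanningForest A Y)
    (hXk : numTrees X = k + 1) (hYk : numTrees Y = k)
    (hsum : weight w X + weight w Y = weight w F + weight w G) :
    ExtremeForest A w (k+1) X := by
  have h1 := hF.2.2 Y hY hYk
  have h2 := hG.2.2 X hX hXk
  have hXG : weight w X = weight w G := by linarith
  exact ⟨hX, hXk, fun H hH hHk => hXG ▸ hG.2.2 H hH hHk⟩

lemma exists_extreme (h : ∃ F, IsSpanningForest A F ∧ numTrees F = k) :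
    ∃ F, ExtremeForest A w k F := by
  classical
  obtain ⟨F0, hF0⟩ := h
  have hne : (Finset.univ.filter
      (fun F : V → Option V => IsSpanningForest A F ∧ numTrees F = k)).Nonempty :=
    ⟨F0, by simp [hF0.1, hF0.2]⟩
  obtain ⟨F, hFmem, hmin⟩ := Finset.exists_min_image _ (weight w) hne
  simp only [Finset.mem_filter, Finset.mem_univ, true_and] at hFmem
  exact ⟨F, hFmem.1, hFmem.2, fun H hH hHk => hmin H (by simp [hH, hHk])⟩

lemma refinement (hF : ExtremeForest A w k F)
    (hex : ∃ G0, ExtremeForest A w (k+1) G0) :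
    ∃ G, ExtremeForest A w (k+1) G ∧
      ∀ s x, G s = none → Reaches G x s → Reaches F x (rootTo F s) := by
  classical
  obtain ⟨G0, hG0⟩ := hex
  -- choose a Hamming-closest extreme (k+1)-forest
  have hne : (Finset.univ.filter
      (fun H : V → Option V => ExtremeForest A w (k+1) H)).Nonempty := ⟨G0, by simp [hG0]⟩
  obtain ⟨G, hGmem, hGmin⟩ := Finset.exists_min_image _
    (fun H : V → Option V => (Finset.univ.filter (fun x => H x ≠ F x)).card) hne
  simp only [Finset.mem_filter, Finset.mem_univ, true_and] at hGmem
  have hG : ExtremeForest A w (k+1) G := hGmem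
  have hFor : IsForest F := hF.1.1
  have hGor : IsForest G := hG.1.1
  have hFk : numTrees F = k := hF.2.1
  have hGk : numTrees G = k + 1 := hG.2.1
  have hFkc : (Finset.univ.filter (fun i => F i = none)).card = k := hFk
  have hGkc : (Finset.univ.filter (fun i => G i = none)).card = k + 1 := hGk
  -- minimality extraction
  have minArg : ∀ (U : Set V), ExtremeForest A w (k+1) (exchange U F G) →
      ∀ x, G x ≠ F x → x ∈ U := by
    intro U hU
    have hle := hGmin (exchange U F G) (by simp [hU])
    have hsub : (Finset.univ.filter (fun x => exchange U F G x ≠ F x)) ⊆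
        (Finset.univ.filter (fun x => G x ≠ F x)) := by
      intro x hx
      simp only [Finset.mem_filter, Finset.mem_univ, true_and] at hx ⊢
      by_cases h : x ∈ U
      · rwa [exchange_mem h] at hx
      · rw [exchange_not_mem h] at hx; exact absurd rfl hx
    have heq := Finset.eq_of_subset_of_card_le hsub hle
    intro x hx
    have hx' : x ∈ Finset.univ.filter (fun x => G x ≠ F x) := by
      simp only [Finset.mem_filter, Finset.mem_univ, true_and]; exact hx
    rw [← heq] at hx'
    simp only [Finset.mem_filter, Finset.mem_univ, true_and] at hx'
    by_contra h
    rw [exchange_not_mem h] at hx'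
    exact hx' rfl
  -- the key exchange step
  have key : ∀ s₀, G s₀ = none → (∀ r, F r = none → ¬ Reaches G r s₀) →
      ∀ x, G x ≠ F x → Reaches G x s₀ := by
    intro s₀ hs₀ hfree
    set D : Set V := treeSet G s₀ with hD
    have hDcl : ∀ x ∈ D, ∀ y, G x = some y → y ∈ D :=
      fun x hx y hxy => treeSet_closed hs₀ hx hxy
    have hDpre : ∀ x y, G x = some y → y ∈ D → x ∈ D :=
      fun x y hxy hy => Relation.ReflTransGen.head hxy hy
    have hXfor : IsForest (exchange D F G) := exchange_isForest hFor hGor hDcl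
    have hYfor : IsForest (exchange D G F) :=
      exchange_isForest' hGor hFor (fun x hx y hxy hy => hx (hDpre x y hxy hy))
    have c1 : (Finset.univ.filter (fun i => i ∈ D ∧ G i = none)) = {s₀} := by
      ext i
      simp only [Finset.mem_filter, Finset.mem_univ, true_and, Finset.mem_singleton]
      constructor
      · rintro ⟨hiD, hir⟩
        exact (reaches_of_none hiD hir).symm
      · rintro rfl
        exact ⟨Relation.ReflTransGen.refl, hs₀⟩
    have c2 : (Finset.univ.filter (fun i => i ∉ D ∧ F i = none)) =
        (Finset.univ.filter (fun i => F i = none)) := by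
      ext i
      simp only [Finset.mem_filter, Finset.mem_univ, true_and]
      exact ⟨fun h => h.2, fun h => ⟨hfree i h, h⟩⟩
    have c3 : (Finset.univ.filter (fun i => i ∈ D ∧ F i = none)) = ∅ := by
      ext i
      simp only [Finset.mem_filter, Finset.mem_univ, true_and, Finset.notMem_empty,
        iff_false, not_and]
      intro hiD hir
      exact hfree i hir hiD
    have c4 : (Finset.univ.filter (fun i => i ∉ D ∧ G i = none)) =
        (Finset.univ.filter (fun i => G i = none)).erase s₀ := by
      ext i
      simp only [Finset.mem_filter, Finset.mem_univ, true_and, Finset.mem_erase]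
      constructor
      · rintro ⟨hiD, hir⟩
        refine ⟨?_, hir⟩
        rintro rfl
        exact hiD Relation.ReflTransGen.refl
      · rintro ⟨hne', hir⟩
        refine ⟨?_, hir⟩
        intro hiD
        exact hne' (reaches_of_none hiD hir).symm
    have hXk : numTrees (exchange D F G) = k + 1 := by
      rw [numTrees_exchange, c1, c2, hFkc]
      simp [add_comm]
    have hs₀mem' : s₀ ∈ Finset.univ.filter (fun i => G i = none) := by
      simp only [Finset.mem_filter, Finset.mem_univ, true_and]
      exact hs₀
    have hYk : numTrees (exchange D G F) = k := by
      rw [numTrees_exchange, c3, c4, Finset.card_erase_of_mem hs₀mem', hGkc]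
      simp
    have hsum := weight_exchange_add (U := D) (F := F) (G := G) w
    have hXext : ExtremeForest A w (k+1) (exchange D F G) :=
      pair_extreme hF hG ⟨hXfor, exchange_spanning hF.1.2 hG.1.2⟩
        ⟨hYfor, exchange_spanning hG.1.2 hF.1.2⟩ hXk hYk hsum
    intro x hx
    exact minArg D hXext x hx
  -- pigeonhole: a free tree exists
  have pigeon : ∃ s₀, G s₀ = none ∧ ∀ r, F r = none → ¬ Reaches G r s₀ := by
    by_contra hcon
    push_neg at hcon
    have hmap : ∀ s, G s = none → ∃ r, F r = none ∧ Reaches G r s := hcon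
    have hcard : (Finset.univ.filter (fun s => G s = none)).card ≤
        (Finset.univ.filter (fun r => F r = none)).card := by
      apply Finset.card_le_card_of_injOn
        (fun s => if h : G s = none then (hmap s h).choose else s)
      · intro s hs
        simp only [Finset.coe_filter, Set.mem_setOf_eq, Finset.mem_filter, Finset.mem_univ, true_and] at hs ⊢
        simp only [dif_pos hs]
        exact (hmap s hs).choose_spec.1
      · intro s hs s' hs' hss
        simp only [Finset.coe_filter, Set.mem_setOf_eq, Finset.mem_univ, true_and] at hs hs'
        simp only [dif_pos hs, dif_pos hs'] at hss
        have h1 := (hmap s hs).choose_spec.2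
        have h2 := (hmap s' hs').choose_spec.2
        rw [hss] at h1
        exact root_unique hs hs' h1 h2
    omega
  obtain ⟨x₀, hx₀⟩ : ∃ x, G x ≠ F x := by
    by_contra h
    push_neg at h
    have hGF : G = F := funext h
    rw [hGF, hFk] at hGk
    omega
  obtain ⟨s₀, hs₀, hfree⟩ := pigeon
  have hΔD : ∀ x, G x ≠ F x → Reaches G x s₀ := key s₀ hs₀ hfree
  have hnonfree : ∀ s, G s = none → s ≠ s₀ → ∃ r, F r = none ∧ Reaches G r s := by
    intro s hs hne'
    by_contra h
    push_neg at h
    have h2 := key s hs h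
    exact hne' (root_unique hs hs₀ (h2 x₀ hx₀) (hΔD x₀ hx₀))
  have lemma3 : ∀ s, G s = none → s ≠ s₀ → ∀ x, Reaches G x s →
      Reaches F x (rootTo F s) := by
    intro s hs hne' x hx
    induction hx using Relation.ReflTransGen.head_induction_on with
    | refl => exact (rootTo_spec hFor s).1
    | @head a c harc hcs ih =>
      by_cases hax : G a = F a
      · exact Relation.ReflTransGen.head (show Arc F a c by rw [Arc, ← hax]; exact harc) ih
      · exact absurd (root_unique hs hs₀ (Relation.ReflTransGen.head harc hcs)
          (hΔD a hax)) hne'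
  have hρroot : F (rootTo F s₀) = none := (rootTo_spec hFor s₀).2
  have hs₀ρ : Reaches F s₀ (rootTo F s₀) := (rootTo_spec hFor s₀).1
  have hs₁ : G (rootTo G (rootTo F s₀)) = none := (rootTo_spec hGor (rootTo F s₀)).2
  have hρs₁ : Reaches G (rootTo F s₀) (rootTo G (rootTo F s₀)) :=
    (rootTo_spec hGor (rootTo F s₀)).1
  have hs₁ne : rootTo G (rootTo F s₀) ≠ s₀ := by
    intro h
    have h7 := hρs₁
    rw [h] at h7
    exact hfree (rootTo F s₀) hρroot h7
  have hs₁T : Reaches F (rootTo G (rootTo F s₀)) (rootTo F s₀) := by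
    have h1 := lemma3 (rootTo G (rootTo F s₀)) hs₁ hs₁ne (rootTo F s₀) hρs₁
    have h5 : rootTo F (rootTo G (rootTo F s₀)) = rootTo F s₀ :=
      reaches_of_none h1 hρroot
    have h6 := (rootTo_spec hFor (rootTo G (rootTo F s₀))).1
    rwa [h5] at h6
  -- pointwise description of the G-roots inside the tree of rootTo F s₀
  have hPt : ∀ i, G i = none → (i ∈ treeSet F (rootTo F s₀) ↔
      (i = s₀ ∨ i = rootTo G (rootTo F s₀))) := by
    intro i hir
    constructor
    · intro hiT
      by_cases h : i = s₀
      · exact Or.inl h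
      · right
        obtain ⟨r, hr, hrs⟩ := hnonfree i hir h
        have h1 := lemma3 i hir h r hrs
        have h2 : rootTo F i = r := reaches_of_none h1 hr
        have h3 : rootTo F i = rootTo F s₀ := rootTo_eq hFor hiT hρroot
        have h4 : Reaches G (rootTo F s₀) i := by rw [← h3, h2]; exact hrs
        exact (root_unique hs₁ hir hρs₁ h4).symm
    · intro h
      rcases h with rfl | rfl
      · exact hs₀ρ
      · exact hs₁T
  have hsetEq : (Finset.univ.filter
      (fun i => i ∈ treeSet F (rootTo F s₀) ∧ G i = none)) =
      {s₀, rootTo G (rootTo F s₀)} := by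
    ext i
    simp only [Finset.mem_filter, Finset.mem_univ, true_and, Finset.mem_insert,
      Finset.mem_singleton]
    constructor
    · rintro ⟨hiT, hir⟩
      exact (hPt i hir).1 hiT
    · intro h
      rcases h with rfl | rfl
      · exact ⟨hs₀ρ, hs₀⟩
      · exact ⟨hs₁T, hs₁⟩
  have hFT1 : (Finset.univ.filter
      (fun i => i ∈ treeSet F (rootTo F s₀) ∧ F i = none)) = {rootTo F s₀} := by
    ext i
    simp only [Finset.mem_filter, Finset.mem_univ, true_and, Finset.mem_singleton]
    constructor
    · rintro ⟨hiT, hir⟩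
      exact (reaches_of_none hiT hir).symm
    · rintro rfl
      exact ⟨Relation.ReflTransGen.refl, hρroot⟩
  have cW2 : (Finset.univ.filter
      (fun i => i ∉ treeSet F (rootTo F s₀) ∧ F i = none)) =
      (Finset.univ.filter (fun i => F i = none)).erase (rootTo F s₀) := by
    ext i
    simp only [Finset.mem_filter, Finset.mem_univ, true_and, Finset.mem_erase]
    constructor
    · rintro ⟨hiT, hir⟩
      refine ⟨?_, hir⟩
      rintro rfl
      exact hiT Relation.ReflTransGen.refl
    · rintro ⟨hne', hir⟩
      refine ⟨?_, hir⟩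
      intro hiT
      exact hne' (reaches_of_none hiT hir).symm
  have cY2 : (Finset.univ.filter
      (fun i => i ∉ treeSet F (rootTo F s₀) ∧ G i = none)) =
      ((Finset.univ.filter (fun i => G i = none)).erase s₀).erase
        (rootTo G (rootTo F s₀)) := by
    ext i
    simp only [Finset.mem_filter, Finset.mem_univ, true_and, Finset.mem_erase]
    constructor
    · rintro ⟨hiT, hir⟩
      refine ⟨?_, ?_, hir⟩
      · rintro rfl
        exact hiT hs₁T
      · rintro rfl
        exact hiT hs₀ρ
    · rintro ⟨hne1, hne2, hir⟩
      refine ⟨?_, hir⟩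
      intro hiT
      rcases (hPt i hir).1 hiT with rfl | rfl
      · exact hne2 rfl
      · exact hne1 rfl
  have hk1 : 1 ≤ k := by
    have : rootTo F s₀ ∈ Finset.univ.filter (fun i => F i = none) := by
      simp only [Finset.mem_filter, Finset.mem_univ, true_and]; exact hρroot
    have := Finset.card_pos.mpr ⟨_, this⟩
    omega
  have hs₀mem : s₀ ∈ Finset.univ.filter (fun i => G i = none) := by
    simp only [Finset.mem_filter, Finset.mem_univ, true_and]; exact hs₀
  have hs₁mem : rootTo G (rootTo F s₀) ∈
      (Finset.univ.filter (fun i => G i = none)).erase s₀ := by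
    simp only [Finset.mem_erase, Finset.mem_filter, Finset.mem_univ, true_and]
    exact ⟨hs₁ne, hs₁⟩
  have hTcl : ∀ x ∈ treeSet F (rootTo F s₀), ∀ y, F x = some y →
      y ∈ treeSet F (rootTo F s₀) :=
    fun x hx y hxy => treeSet_closed hρroot hx hxy
  have hTpre : ∀ x y, F x = some y → y ∈ treeSet F (rootTo F s₀) →
      x ∈ treeSet F (rootTo F s₀) :=
    fun x y hxy hy => Relation.ReflTransGen.head hxy hy
  have hWfor : IsForest (exchange (treeSet F (rootTo F s₀)) F G) :=
    exchange_isForest' hFor hGor (fun x hx y hxy hy => hx (hTpre x y hxy hy))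
  have hY'for : IsForest (exchange (treeSet F (rootTo F s₀)) G F) :=
    exchange_isForest hGor hFor hTcl
  have hρmem : rootTo F s₀ ∈ Finset.univ.filter (fun i => F i = none) := by
    simp only [Finset.mem_filter, Finset.mem_univ, true_and]
    exact hρroot
  have hnotmem : s₀ ∉ ({rootTo G (rootTo F s₀)} : Finset V) := by
    simp only [Finset.mem_singleton]
    exact fun h => hs₁ne h.symm
  have hWk : numTrees (exchange (treeSet F (rootTo F s₀)) F G) = k + 1 := by
    rw [numTrees_exchange, hsetEq, cW2, Finset.card_erase_of_mem hρmem, hFkc,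
      Finset.card_insert_of_notMem hnotmem]
    simp only [Finset.card_singleton]
    omega
  have hY'k : numTrees (exchange (treeSet F (rootTo F s₀)) G F) = k := by
    rw [numTrees_exchange, hFT1, cY2, Finset.card_erase_of_mem hs₁mem,
      Finset.card_erase_of_mem hs₀mem, hGkc]
    simp only [Finset.card_singleton]
    omega
  have hsumT := weight_exchange_add (U := treeSet F (rootTo F s₀)) (F := F) (G := G) w
  have hWext : ExtremeForest A w (k+1) (exchange (treeSet F (rootTo F s₀)) F G) :=
    pair_extreme hF hG ⟨hWfor, exchange_spanning hF.1.2 hG.1.2⟩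
      ⟨hY'for, exchange_spanning hG.1.2 hF.1.2⟩ hWk hY'k hsumT
  have hΔT : ∀ x, G x ≠ F x → x ∈ treeSet F (rootTo F s₀) :=
    minArg _ hWext
  have lemma5 : ∀ x, Reaches G x s₀ → Reaches F x (rootTo F s₀) := by
    intro x hx
    induction hx using Relation.ReflTransGen.head_induction_on with
    | refl => exact hs₀ρ
    | @head a c harc hcs ih =>
      by_cases hax : G a = F a
      · exact Relation.ReflTransGen.head (show Arc F a c by rw [Arc, ← hax]; exact harc) ih
      · exact hΔT a hax
  refine ⟨G, hG, ?_⟩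
  intro s x hs hx
  by_cases h : s = s₀
  · subst h
    exact lemma5 x hx
  · exact lemma3 s hs h x hx

end Refine


end ForestAux

/-- The sequence of algebras `A_k` is increasing: `A_1 = {∅, N}`, `A_k ⊆ A_{k+1}`, and
`A_N = 2^N`. -/
theorem alg_monotone {V : Type*} [Fintype V] [DecidableEq V]
    (A : V → V → Prop) (w : V → V → ℝ)
    (hEx : ∀ k, 1 ≤ k → k ≤ Fintype.card V →
      ∃ F, IsSpanningForest A F ∧ numTrees F = k) :
    alg A w 1 = ⊥ ∧
      (∀ k, 1 ≤ k → k < Fintype.card V → alg A w k ≤ alg A w (k + 1)) ∧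
      alg A w (Fintype.card V) = ⊤ := by
  classical
  refine ⟨?_, ?_, ?_⟩
  · -- A₁ = ⊥
    apply le_antisymm ?_ bot_le
    unfold alg
    apply MeasurableSpace.generateFrom_le
    rintro S ⟨F, r, hFext, hr, rfl⟩
    have hFor : IsForest F := hFext.1.1
    have hcard : (Finset.univ.filter (fun i => F i = none)).card = 1 := hFext.2.1
    have huniv : treeSet F r = Set.univ := by
      apply Set.eq_univ_of_forall
      intro x
      obtain ⟨r', hr', hr'n⟩ := ForestAux.exists_root hFor x
      have hmem : r' ∈ Finset.univ.filter (fun i => F i = none) := by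
        simp only [Finset.mem_filter, Finset.mem_univ, true_and]; exact hr'n
      have hmem2 : r ∈ Finset.univ.filter (fun i => F i = none) := by
        simp only [Finset.mem_filter, Finset.mem_univ, true_and]; exact hr
      have hrr : r' = r := by
        obtain ⟨a, ha⟩ := Finset.card_eq_one.mp hcard
        rw [ha, Finset.mem_singleton] at hmem hmem2
        rw [hmem, hmem2]
      rw [hrr] at hr'
      exact hr'
    rw [huniv]
    exact MeasurableSet.univ
  · -- monotone step
    intro k hk1 hk2
    unfold alg
    apply MeasurableSpace.generateFrom_le
    rintro S ⟨F, r, hFext, hr, rfl⟩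
    obtain ⟨G, hGext, href⟩ := ForestAux.refinement hFext
      (ForestAux.exists_extreme (hEx (k+1) (by omega) (by omega)))
    have hGor : IsForest G := hGext.1.1
    have hFor : IsForest F := hFext.1.1
    have hT : treeSet F r = ⋃ x ∈ treeSet F r, treeSet G (ForestAux.rootTo G x) := by
      ext y
      simp only [Set.mem_iUnion, exists_prop]
      constructor
      · intro hy
        exact ⟨y, hy, (ForestAux.rootTo_spec hGor y).1⟩
      · rintro ⟨x, hx, hyx⟩
        have hs := ForestAux.rootTo_spec hGor x
        have h1 : Reaches F y (ForestAux.rootTo F (ForestAux.rootTo G x)) :=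
          href _ y hs.2 hyx
        have h2 : Reaches F x (ForestAux.rootTo F (ForestAux.rootTo G x)) :=
          href _ x hs.2 hs.1
        have h3 : ForestAux.rootTo F x = r := ForestAux.rootTo_eq hFor hx hr
        have h4 : ForestAux.rootTo F x =
            ForestAux.rootTo F (ForestAux.rootTo G x) :=
          ForestAux.rootTo_eq hFor h2
            (ForestAux.rootTo_spec hFor (ForestAux.rootTo G x)).2
        rw [h3] at h4
        rw [← h4] at h1
        exact h1
    rw [hT]
    apply MeasurableSet.biUnion (Set.to_countable _)
    intro b _
    apply MeasurableSpace.measurableSet_generateFrom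
    exact ⟨G, ForestAux.rootTo G b, hGext, (ForestAux.rootTo_spec hGor b).2, rfl⟩
  · -- A_N = ⊤
    have hforest : IsForest (fun _ : V => (none : Option V)) := by
      intro i h
      obtain ⟨b, hb, -⟩ := Relation.TransGen.head'_iff.mp h
      exact absurd hb (by simp [Arc])
    have hext : ExtremeForest A w (Fintype.card V) (fun _ => none) := by
      refine ⟨⟨hforest, fun i j h => absurd h (by simp)⟩, ?_, ?_⟩
      · unfold numTrees
        simp
      · intro Gn hGn hGnk
        have hGnall : Gn = fun _ => none := by
          have huniv : Finset.univ.filter (fun i => Gn i = none) = Finset.univ := by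
            apply Finset.eq_univ_of_card
            exact hGnk
          funext i
          have := Finset.mem_univ i
          rw [← huniv, Finset.mem_filter] at this
          exact this.2
        rw [hGnall]
    have hsingle : ∀ b : V, ({b} : Set V) = treeSet (fun _ => none) b := by
      intro b
      ext y
      simp only [Set.mem_singleton_iff]
      constructor
      · rintro rfl
        exact Relation.ReflTransGen.refl
      · intro h
        rcases Relation.ReflTransGen.cases_head h with h | ⟨c, hc, _⟩
        · exact h
        · exact absurd hc (by simp [Arc])
    apply le_antisymm le_top
    intro S _
    have hS : S = ⋃ x ∈ S, {x} := (Set.biUnion_of_singleton S).symm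
    rw [hS]
    apply MeasurableSet.biUnion (Set.to_countable _)
    intro b _
    apply MeasurableSpace.measurableSet_generateFrom
    exact ⟨fun _ => none, b, hext, rfl, hsingle b⟩
end
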